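/- In the free abelian group on chord diagrams with 2g chords (modulo diagrams with more than one cycle), the class of any chord diagram D with more than one connected component is a boundary: there exists a diagram D' with 2g+1 chords and exactly 2 cycles, obtained from D by adding a chord c crossing no chord of D and separating the components, such that the alternating sum of the one-chord deletions of D' equals ±D modulo diagrams with more than one cycle. -/

import Mathlib

/-- The next point clockwise on the cyclically ordered set of `N` points. -/
def cnext {N : ℕ} (x : Fin N) : Fin N := ⟨(x.val + 1) % N, Nat.mod_lt _ x.pos⟩

/-- Clockwise distance from `x` to `y` among `N` cyclically ordered points. -/
def cdist {N : ℕ} (x y : Fin N) : ℕ := (y.val + N - x.val) % N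

/-- `z` lies strictly between `x` and `y` in clockwise cyclic order. -/
def CBetween {N : ℕ} (x z y : Fin N) : Prop := 0 < cdist x z ∧ cdist x z < cdist x y

/-- A chord diagram with `n` chords is a fixed-point-free involution (perfect
matching) `m` on the `2n` cyclically ordered points `Fin (2n)`.  The chord at
`a` has endpoints `a` and `m a`.  Two chords cross iff their endpoints
interleave in the cyclic order: exactly one endpoint of the chord at `b` lies
strictly inside the arc from `a` to `m a`. -/
def Crosses {N : ℕ} (m : Fin N → Fin N) (a b : Fin N) : Prop :=
  Xor' (CBetween a b (m a)) (CBetween a (m b) (m a))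

/-- The boundary traversal permutation of the one-vertex fat graph associated
to the chord diagram `m`: follow the chord from `x` to `m x`, then the outer
edge to the next point `m x + 1`. -/
def bperm {N : ℕ} (m : Fin N → Fin N) : Fin N → Fin N := fun x => cnext (m x)

/-- The number of cycles of the chord diagram `m`, i.e. the number of boundary
components of the associated one-vertex fat graph: the number of orbits of the
boundary traversal permutation, counted by their minimal elements (every orbit
of a permutation of `Fin N` is exhausted by the first `N` iterates). -/
def numCycles {N : ℕ} (m : Fin N → Fin N) : ℕ :=
  (Finset.univ.filter fun i : Fin N =>
    ∀ k ∈ Finset.range N, ¬ ((bperm m)^[k] i < i)).card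

/-- A chord diagram is disconnected (has more than one connected component,
where connected components are generated by the crossing relation on chords)
iff the chords can be split into two nonempty chord-closed sets with no
crossing between them. -/
def Disconnected {N : ℕ} (m : Fin N → Fin N) : Prop :=
  ∃ A : Finset (Fin N), A.Nonempty ∧ Aᶜ.Nonempty ∧ (∀ i ∈ A, m i ∈ A) ∧
    ∀ a ∈ A, ∀ b ∈ Aᶜ, ¬ Crosses m a b

/-- Deletion of the chord with endpoints `p` and `m p` from a diagram on
`M + 2` points, yielding a diagram on `M` points via the order-preserving
relabelling of the remaining points. -/
noncomputable def deleteChord {M : ℕ} (m : Fin (M + 2) → Fin (M + 2))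
    (p : Fin (M + 2)) : Fin M → Fin M :=
  let s : Finset (Fin (M + 2)) := (Finset.univ.erase p).erase (m p)
  if hs : s.card = M then
    let e := s.orderIsoOfFin hs
    fun i => if h : m (e i) ∈ s then e.symm ⟨m (e i), h⟩ else i
  else fun i => i

/-- The boundary of a diagram `m` with `M/2 + 1` chords in the free abelian
group on diagrams with `M/2` chords: the alternating sum (chords ordered by
their smaller endpoint) of the one-chord deletions of `m`. -/
noncomputable def boundarySum {M : ℕ} (m : Fin (M + 2) → Fin (M + 2)) :
    (Fin M → Fin M) →₀ ℤ :=
  ∑ a ∈ Finset.univ.filter (fun a => a < m a),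
    ((-1 : ℤ) ^ ((Finset.univ.filter fun b => b < m b ∧ b < a).card)) •
      Finsupp.single (deleteChord m a) 1

/-!
STATEMENT 11: In the free abelian group on chord diagrams with 2g chords
(modulo diagrams with more than one cycle), the class of any chord diagram D
with more than one connected component is a boundary: there exists a diagram D'
with 2g+1 chords and exactly 2 cycles, obtained from D by adding a chord c
crossing no chord of D and separating the components, such that the alternating
sum of the one-chord deletions of D' equals ±D modulo diagrams with more than
one cycle.

Formalization: D is a fixed-point-free involution of `Fin (2n+2)` with one
cycle (a 0-filling system) which is disconnected; D' is a diagram on two more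
points whose chord at `p` crosses no other chord, has chords strictly on both
sides, and deletes to D; the alternating sum of one-chord deletions of D'
equals ε·D (ε = ±1) modulo the span of diagrams with at least two cycles.
-/
namespace DZF
open Function Finset

variable {N : ℕ}

open Function Finset

variable {N : ℕ}

lemma cdist_eq (a b : Fin N) :
    cdist a b = if a.val ≤ b.val then b.val - a.val else b.val + N - a.val := by
  have ha := a.isLt; have hb := b.isLt
  unfold cdist
  rcases le_or_gt a.val b.val with h | h
  · rw [if_pos h]
    have h2 : b.val + N - a.val = (b.val - a.val) + N := by omega
    rw [h2, Nat.add_mod_right, Nat.mod_eq_of_lt (by omega)]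
  · rw [if_neg (by omega), Nat.mod_eq_of_lt (by omega)]

lemma cdist_lt (a b : Fin N) : cdist a b < N := Nat.mod_lt _ b.pos

lemma cdist_self (a : Fin N) : cdist a a = 0 := by
  rw [cdist_eq]; simp

lemma cdist_eq_zero_iff {a b : Fin N} : cdist a b = 0 ↔ a = b := by
  have ha := a.isLt; have hb := b.isLt
  rw [cdist_eq, Fin.ext_iff]
  split_ifs <;> omega

lemma cdist_inj {g a b : Fin N} (h : cdist g a = cdist g b) : a = b := by
  have hg := g.isLt; have ha := a.isLt; have hb := b.isLt
  rw [cdist_eq, cdist_eq] at h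
  rw [Fin.ext_iff]
  split_ifs at h <;> omega

lemma cdist_rel (g a b : Fin N) :
    (cdist g a ≤ cdist g b ∧ cdist a b + cdist g a = cdist g b) ∨
    (cdist g b < cdist g a ∧ cdist a b + cdist g a = N + cdist g b) := by
  have hg := g.isLt; have ha := a.isLt; have hb := b.isLt
  simp only [cdist_eq]
  split_ifs <;> omega

lemma cbetween_iff {x z y : Fin N} :
    CBetween x z y ↔ ((x.val < z.val ∧ z.val < y.val) ∨ (y.val < x.val ∧ x.val < z.val) ∨
      (z.val < y.val ∧ y.val < x.val)) := by
  have hx := x.isLt; have hy := y.isLt; have hz := z.isLt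
  simp only [CBetween, cdist_eq]
  split_ifs <;> omega

lemma cnext_val (x : Fin N) : (cnext x).val = if x.val + 1 = N then 0 else x.val + 1 := by
  have hx := x.isLt
  show (x.val + 1) % N = _
  split_ifs with h
  · rw [h, Nat.mod_self]
  · exact Nat.mod_eq_of_lt (by omega)

lemma cnext_inj : Function.Injective (cnext : Fin N → Fin N) := by
  intro a b h
  have ha := a.isLt; have hb := b.isLt
  have := congrArg Fin.val h
  rw [cnext_val, cnext_val] at this
  rw [Fin.ext_iff]
  split_ifs at this <;> omega

lemma cdist_cnext (p w : Fin N) :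
    cdist p (cnext w) = if cdist p w + 1 = N then 0 else cdist p w + 1 := by
  have hp := p.isLt; have hw := w.isLt
  have h1 := cnext_val w
  simp only [cdist_eq, h1]
  split_ifs <;> omega

lemma cbetween_strictMono {K K' : ℕ} {g : Fin K → Fin K'} (hg : StrictMono g)
    (x z y : Fin K) : CBetween (g x) (g z) (g y) ↔ CBetween x z y := by
  have h1 : ∀ a b : Fin K, ((g a).val < (g b).val ↔ a.val < b.val) := by
    intro a b
    rw [← Fin.lt_def, ← Fin.lt_def, hg.lt_iff_lt]
  simp only [cbetween_iff, h1]


open Function Finset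

variable {N : ℕ}

/-- Reachability under iterates. -/
def Reach (f : Fin N → Fin N) (x y : Fin N) : Prop := ∃ k, f^[k] x = y

lemma reach_refl (f : Fin N → Fin N) (x : Fin N) : Reach f x x := ⟨0, rfl⟩

lemma reach_step {f : Fin N → Fin N} {x y : Fin N} (h : Reach f x y) : Reach f x (f y) := by
  obtain ⟨k, hk⟩ := h
  exact ⟨k + 1, by rw [Function.iterate_succ_apply', hk]⟩

lemma reach_trans {f : Fin N → Fin N} {x y z : Fin N} (h1 : Reach f x y) (h2 : Reach f y z) :
    Reach f x z := by
  obtain ⟨k, hk⟩ := h1; obtain ⟨l, hl⟩ := h2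
  exact ⟨l + k, by rw [Function.iterate_add_apply, hk, hl]⟩

lemma exists_period (f : Fin N → Fin N) (hf : Function.Injective f) (x : Fin N) :
    ∃ p, 0 < p ∧ p ≤ N ∧ f^[p] x = x := by
  obtain ⟨a, b, hne, heq⟩ := Fintype.exists_ne_map_eq_of_card_lt
    (fun k : Fin (N + 1) => f^[k.val] x) (by simp)
  rcases lt_or_gt_of_ne hne with h | h
  · refine ⟨b.val - a.val, by omega, by omega, ?_⟩
    have h2 : f^[a.val] (f^[b.val - a.val] x) = f^[a.val] x := by
      rw [← Function.iterate_add_apply]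
      rw [show a.val + (b.val - a.val) = b.val by omega]
      exact heq.symm
    exact (hf.iterate a.val) h2
  · refine ⟨a.val - b.val, by omega, by omega, ?_⟩
    have h2 : f^[b.val] (f^[a.val - b.val] x) = f^[b.val] x := by
      rw [← Function.iterate_add_apply]
      rw [show b.val + (a.val - b.val) = a.val by omega]
      exact heq
    exact (hf.iterate b.val) h2

lemma reach_small {f : Fin N → Fin N} (hf : Function.Injective f) {x y : Fin N}
    (h : Reach f x y) : ∃ k < N, f^[k] x = y := by
  obtain ⟨k, hk⟩ := h
  obtain ⟨p, hp0, hpN, hpx⟩ := exists_period f hf x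
  refine ⟨k % p, by have := Nat.mod_lt k hp0; omega, ?_⟩
  conv at hk => rw [← Nat.mod_add_div k p]
  rw [Function.iterate_add_apply, Function.iterate_mul] at hk
  rwa [Function.iterate_fixed hpx] at hk

lemma reach_symm {f : Fin N → Fin N} (hf : Function.Injective f) {x y : Fin N}
    (h : Reach f x y) : Reach f y x := by
  obtain ⟨p, hp0, hpN, hpx⟩ := exists_period f hf x
  obtain ⟨k, hk⟩ := h
  refine ⟨p - k % p, ?_⟩
  have h2 : f^[k % p] x = y := by
    conv at hk => rw [← Nat.mod_add_div k p]
    rw [Function.iterate_add_apply, Function.iterate_mul] at hk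
    rwa [Function.iterate_fixed hpx] at hk
  rw [← h2, ← Function.iterate_add_apply]
  rw [show p - k % p + k % p = p by have := Nat.mod_lt k hp0; omega]
  exact hpx

/-- The predicate used in `numCycles`. -/
def CycMin (f : Fin N → Fin N) (i : Fin N) : Prop := ∀ k ∈ Finset.range N, ¬ (f^[k] i < i)

instance (f : Fin N → Fin N) : DecidablePred (CycMin f) := fun i =>
  inferInstanceAs (Decidable (∀ k ∈ Finset.range N, ¬ (f^[k] i < i)))

lemma numCycles_eq (m : Fin N → Fin N) :
    numCycles m = (Finset.univ.filter fun i => CycMin (bperm m) i).card := rfl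

lemma cycMin_le {f : Fin N → Fin N} (hf : Function.Injective f) {i y : Fin N}
    (hi : CycMin f i) (h : Reach f i y) : i ≤ y := by
  obtain ⟨k, hkN, hk⟩ := reach_small hf h
  have := hi k (Finset.mem_range.mpr hkN)
  rw [hk] at this
  exact le_of_not_gt this

lemma exists_cycMin (f : Fin N → Fin N) (hf : Function.Injective f) (x : Fin N) :
    ∃ i, CycMin f i ∧ Reach f i x := by
  have hN : 0 < N := x.pos
  set O : Finset (Fin N) := (Finset.range N).image (fun k => f^[k] x) with hO
  have hxO : x ∈ O := Finset.mem_image.mpr ⟨0, Finset.mem_range.mpr hN, rfl⟩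
  have hne : O.Nonempty := ⟨x, hxO⟩
  refine ⟨O.min' hne, ?_, ?_⟩
  · intro k _ hlt
    have hmem : f^[k] (O.min' hne) ∈ O := by
      have h1 : Reach f x (O.min' hne) := by
        obtain ⟨j, _, hj⟩ := Finset.mem_image.mp (O.min'_mem hne)
        exact ⟨j, hj⟩
      have h2 : Reach f x (f^[k] (O.min' hne)) := reach_trans h1 ⟨k, rfl⟩
      obtain ⟨j, hjN, hj⟩ := reach_small hf h2
      exact Finset.mem_image.mpr ⟨j, Finset.mem_range.mpr hjN, hj⟩
    exact absurd (O.min'_le _ hmem) (not_le.mpr hlt)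
  · have h1 : Reach f x (O.min' hne) := by
      obtain ⟨j, _, hj⟩ := Finset.mem_image.mp (O.min'_mem hne)
      exact ⟨j, hj⟩
    exact reach_symm hf h1

lemma cycMin_unique {f : Fin N → Fin N} (hf : Function.Injective f) {i j : Fin N}
    (hi : CycMin f i) (hj : CycMin f j) (h : Reach f i j) : i = j :=
  le_antisymm (cycMin_le hf hi h) (cycMin_le hf hj (reach_symm hf h))

lemma all_reach_of_one {m : Fin N → Fin N} (hf : Function.Injective (bperm m))
    (h1 : numCycles m = 1) : ∀ x y, Reach (bperm m) x y := by
  rw [numCycles_eq] at h1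
  obtain ⟨i0, hi0⟩ := Finset.card_eq_one.mp h1
  have key : ∀ x, Reach (bperm m) i0 x := by
    intro x
    obtain ⟨i, hi, hr⟩ := exists_cycMin (bperm m) hf x
    have : i ∈ Finset.univ.filter fun i => CycMin (bperm m) i :=
      Finset.mem_filter.mpr ⟨Finset.mem_univ _, hi⟩
    rw [hi0, Finset.mem_singleton] at this
    rwa [← this]
  intro x y
  exact reach_trans (reach_symm hf (key x)) (key y)

lemma two_le_numCycles {m : Fin N → Fin N} (hf : Function.Injective (bperm m))
    {a b : Fin N} (hab : ¬ Reach (bperm m) a b) : 2 ≤ numCycles m := by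
  obtain ⟨i, hi, hia⟩ := exists_cycMin (bperm m) hf a
  obtain ⟨j, hj, hjb⟩ := exists_cycMin (bperm m) hf b
  have hij : i ≠ j := by
    intro h
    exact hab (reach_trans (reach_symm hf hia) (h ▸ hjb))
  rw [numCycles_eq]
  have hsub : ({i, j} : Finset (Fin N)) ⊆ Finset.univ.filter fun i => CycMin (bperm m) i := by
    intro x hx
    rcases Finset.mem_insert.mp hx with rfl | hx
    · exact Finset.mem_filter.mpr ⟨Finset.mem_univ _, hi⟩
    · rw [Finset.mem_singleton] at hx
      exact Finset.mem_filter.mpr ⟨Finset.mem_univ _, hx ▸ hj⟩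
  calc 2 = ({i, j} : Finset (Fin N)).card := (Finset.card_pair hij).symm
    _ ≤ _ := Finset.card_le_card hsub

lemma numCycles_eq_two {m : Fin N → Fin N} (hf : Function.Injective (bperm m))
    {a b : Fin N} (hab : ¬ Reach (bperm m) a b)
    (hcov : ∀ z, Reach (bperm m) a z ∨ Reach (bperm m) b z) : numCycles m = 2 := by
  obtain ⟨i, hi, hia⟩ := exists_cycMin (bperm m) hf a
  obtain ⟨j, hj, hjb⟩ := exists_cycMin (bperm m) hf b
  have hij : i ≠ j := by
    intro h
    exact hab (reach_trans (reach_symm hf hia) (h ▸ hjb))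
  rw [numCycles_eq]
  have heq : (Finset.univ.filter fun i => CycMin (bperm m) i) = {i, j} := by
    apply Finset.ext
    intro x
    constructor
    · intro hx
      have hx' := (Finset.mem_filter.mp hx).2
      rcases hcov x with h | h
      · have : i = x := cycMin_unique hf hi hx' (reach_trans hia h)
        simp [← this]
      · have : j = x := cycMin_unique hf hj hx' (reach_trans hjb h)
        simp [← this]
    · intro hx
      rcases Finset.mem_insert.mp hx with rfl | hx
      · exact Finset.mem_filter.mpr ⟨Finset.mem_univ _, hi⟩
      · rw [Finset.mem_singleton] at hx
        exact Finset.mem_filter.mpr ⟨Finset.mem_univ _, hx ▸ hj⟩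
  rw [heq, Finset.card_pair hij]

lemma bperm_inj {m : Fin N → Fin N} (hm : Function.Involutive m) :
    Function.Injective (bperm m) :=
  fun a b h => hm.injective (cnext_inj h)

/-- Non-crossing chord: the partner is not reachable. -/
lemma not_reach_of_noncross (m : Fin N → Fin N) (p : Fin N)
    (hinv2 : m (m p) = p) (hne : m p ≠ p)
    (hcl : ∀ x, CBetween p x (m p) → CBetween p (m x) (m p)) :
    ¬ Reach (bperm m) (m p) p := by
  set S : Fin N → Prop := fun z => CBetween p z (m p) ∨ z = m p with hS
  have hdpos : 0 < cdist p (m p) := by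
    rcases Nat.eq_zero_or_pos (cdist p (m p)) with h | h
    · exact absurd (cdist_eq_zero_iff.mp h).symm hne
    · exact h
  have hstep : ∀ z, S z → S (bperm m z) := by
    intro z hz
    rcases hz with hz | rfl
    · have h2 := hcl z hz
      have h22 : cdist p (m z) < cdist p (m p) := h2.2
      show S (cnext (m z))
      have h3 : cdist p (cnext (m z)) = cdist p (m z) + 1 := by
        rw [cdist_cnext]
        have := cdist_lt p (m p)
        rw [if_neg (by omega)]
      rcases eq_or_lt_of_le (Nat.succ_le_of_lt h22) with h4 | h4
      · right
        exact cdist_inj (h3.trans h4)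
      · left
        exact ⟨by rw [h3]; omega, by rw [h3]; omega⟩
    · show S (cnext (m (m p)))
      rw [hinv2]
      have h1 : cdist p (cnext p) = 1 := by
        rw [cdist_cnext, cdist_self]
        have h2 : 2 ≤ N := by
          by_contra h
          interval_cases N
          · exact absurd p.isLt (by omega)
          · exact hne (Subsingleton.elim _ _)
        rw [if_neg (by omega)]
      rcases eq_or_lt_of_le (Nat.succ_le_of_lt hdpos) with h4 | h4
      · right
        exact cdist_inj (h1.trans h4)
      · left
        exact ⟨by rw [h1]; omega, by rw [h1]; omega⟩
  intro hr
  obtain ⟨k, hk⟩ := hr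
  have hall : ∀ k, S ((bperm m)^[k] (m p)) := by
    intro k
    induction k with
    | zero => exact Or.inr rfl
    | succ k ih => rw [Function.iterate_succ_apply']; exact hstep _ ih
  have := hall k
  rw [hk] at this
  rcases this with h | h
  · rw [CBetween, cdist_self] at h
    exact absurd h.1 (lt_irrefl 0)
  · exact hne h.symm

lemma deleteChord_involutive {M : ℕ} (m : Fin (M + 2) → Fin (M + 2))
    (hm : Function.Involutive m) (p : Fin (M + 2)) :
    Function.Involutive (deleteChord m p) := by
  intro i
  unfold deleteChord
  set s : Finset (Fin (M + 2)) := (Finset.univ.erase p).erase (m p) with hs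
  by_cases hc : s.card = M
  · simp only [dif_pos hc]
    set e := s.orderIsoOfFin hc with he
    by_cases h1 : m (e i) ∈ s
    · rw [dif_pos h1]
      have h2 : (e (e.symm ⟨m (e i), h1⟩) : Fin (M + 2)) = m (e i) := by
        rw [OrderIso.apply_symm_apply]
      have h3 : m (e (e.symm ⟨m (e i), h1⟩)) ∈ s := by
        rw [h2, hm]
        exact (e i).2
      rw [dif_pos h3]
      have h4 : (⟨m ↑(e (e.symm ⟨m ↑(e i), h1⟩)), h3⟩ : {x // x ∈ s}) = e i := by
        apply Subtype.ext
        show m ↑(e (e.symm ⟨m ↑(e i), h1⟩)) = ↑(e i)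
        rw [h2, hm]
      rw [h4, OrderIso.symm_apply_apply]
    · rw [dif_neg h1, dif_neg h1]
  · simp only [dif_neg hc]


open Function Finset

variable {N : ℕ}

lemma crosses_symm {m : Fin N → Fin N} (hinv : Function.Involutive m)
    {a b : Fin N} (h : Crosses m a b) : Crosses m b a := by
  by_cases hab : b = a
  · subst hab
    exfalso
    rcases h with ⟨h1, h2⟩ | ⟨h1, h2⟩
    · rw [CBetween, cdist_self] at h1
      exact absurd h1.1 (lt_irrefl 0)
    · exact absurd h1.2 (lt_irrefl _)
  by_cases hma : b = m a
  · subst hma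
    exfalso
    rcases h with ⟨h1, h2⟩ | ⟨h1, h2⟩
    · exact absurd h1.2 (lt_irrefl _)
    · rw [hinv] at h1
      rw [CBetween, cdist_self] at h1
      exact absurd h1.1 (lt_irrefl 0)
  · have hmb : a ≠ m b := fun h' => hma (by rw [h', hinv])
    have h1 : a.val ≠ b.val := fun h' => hab (Fin.ext h'.symm)
    have h2 : b.val ≠ (m a).val := fun h' => hma (Fin.ext h')
    have h3 : a.val ≠ (m b).val := fun h' => hmb (Fin.ext h')
    have h4 : (m a).val ≠ (m b).val := fun h' => hab (hinv.injective (Fin.ext h'.symm))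
    rw [Crosses, Xor', xor_def, cbetween_iff, cbetween_iff] at h ⊢
    have ha := a.isLt; have hb := b.isLt
    have hma' := (m a).isLt; have hmb' := (m b).isLt
    omega

lemma cbetween_partition {z w dz : Fin N} (h1 : dz ≠ z) (hwz : w ≠ z) (hwdz : w ≠ dz) :
    CBetween z w dz ↔ ¬ CBetween dz w z := by
  have e1 : dz.val ≠ z.val := fun h => h1 (Fin.ext h)
  have e2 : w.val ≠ z.val := fun h => hwz (Fin.ext h)
  have e3 : w.val ≠ dz.val := fun h => hwdz (Fin.ext h)
  rw [cbetween_iff, cbetween_iff]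
  have := z.isLt; have := w.isLt; have := dz.isLt
  omega

lemma nocross_sep {z dz x dx w dw : Fin N}
    (h1 : CBetween z x dz) (h2 : CBetween z dx dz)
    (h3 : CBetween dz w z) (h4 : CBetween dz dw z) :
    ¬ Xor' (CBetween x w dx) (CBetween x dw dx) := by
  rw [cbetween_iff] at h1 h2 h3 h4
  rw [Xor', xor_def, cbetween_iff, cbetween_iff]
  have := z.isLt; have := dz.isLt; have := x.isLt; have := dx.isLt
  have := w.isLt; have := dw.isLt
  omega

lemma exists_interval (D : Fin N → Fin N) (hinv : Function.Involutive D)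
    (hfix : ∀ i, D i ≠ i) (hdisc : Disconnected D) :
    ∃ l r : ℕ, l ≤ r ∧ r < N ∧ (0 < l ∨ r + 1 < N) ∧
      ∀ i : Fin N, l ≤ i.val → i.val ≤ r → l ≤ (D i).val ∧ (D i).val ≤ r := by
  classical
  obtain ⟨A, hA, hAc, hclA, hnc⟩ := hdisc
  obtain ⟨a0, ha0⟩ := hA
  set R : Fin N → Fin N → Prop := fun u v => Crosses D u v ∨ v = D u with hR
  set C : Fin N → Prop := fun y => Relation.ReflTransGen R a0 y with hCdef
  have hCa0 : C a0 := Relation.ReflTransGen.refl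
  have hCD : ∀ x, C x → C (D x) := fun x hx => hx.tail (Or.inr rfl)
  have hCx : ∀ x, C x → ∀ w, Crosses D x w → C w := fun x hx w hw => hx.tail (Or.inl hw)
  have hCA : ∀ x, C x → x ∈ A := by
    intro x hx
    induction hx with
    | refl => exact ha0
    | @tail b c h step ih =>
      rcases step with hc | he
      · by_contra hb
        exact hnc _ ih _ (Finset.mem_compl.mpr hb) hc
      · subst he; exact hclA _ ih
  have hRsymm : ∀ u v, R u v → R v u := by
    intro u v h
    rcases h with h | h
    · exact Or.inl (crosses_symm hinv h)
    · right; rw [h, hinv]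
  have hCconn : ∀ x, C x → Relation.ReflTransGen R x a0 :=
    fun x hx => (@Relation.ReflTransGen.stdSymm _ R ⟨fun _ _ h => hRsymm _ _ h⟩).symm _ _ hx
  -- non-member points don't cross members
  have hnocross : ∀ z, ¬ C z → ∀ x, C x → ¬ Crosses D z x := by
    intro z hz x hx hc
    exact hz (hCx x hx z (crosses_symm hinv hc))
  have hCne : ∀ z, ¬ C z → ∀ x, C x → x ≠ z := fun z hz x hx h => hz (h ▸ hx)
  -- the gap dichotomy
  have hzout : ∀ z, ¬ C z →
      (∀ c, C c → CBetween z c (D z)) ∨ (∀ c, C c → CBetween (D z) c z) := by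
    intro z hz
    have hDz : ¬ C (D z) := by
      intro h
      exact hz (by have h2 := hCD _ h; rwa [hinv] at h2)
    have hsame : ∀ x, C x → (CBetween z x (D z) ↔ CBetween z (D x) (D z)) := by
      intro x hx
      have h := hnocross z hz x hx
      rw [Crosses, Xor', xor_def] at h
      tauto
    have hpart : ∀ x, C x → (CBetween z x (D z) ↔ ¬ CBetween (D z) x z) := by
      intro x hx
      exact cbetween_partition (hfix z) (hCne z hz x hx) (hCne (D z) hDz x hx)
    by_contra hcon
    push_neg at hcon
    obtain ⟨⟨c1, hc1C, hc1⟩, ⟨c2, hc2C, hc2⟩⟩ := hcon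
    -- c1 is on side2, c2 on side1
    have hc1s2 : CBetween (D z) c1 z := by
      by_contra h
      exact hc1 ((hpart c1 hc1C).mpr h)
    have hc2s1 : CBetween z c2 (D z) := (hpart c2 hc2C).mpr hc2
    -- every point reachable from c2 stays on side1
    have hchain : ∀ w, Relation.ReflTransGen R c2 w → C w ∧ CBetween z w (D z) := by
      intro w hw
      induction hw with
      | refl => exact ⟨hc2C, hc2s1⟩
      | @tail b c h step ih =>
        rcases step with hc | he
        · have hcC : C c := hCx b ih.1 c hc
          refine ⟨hcC, ?_⟩
          by_contra hcs
          have hcs2 : CBetween (D z) c z := by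
            by_contra h2
            exact hcs ((hpart c hcC).mpr h2)
          have hcs2' : CBetween (D z) (D c) z := by
            by_contra h2
            have := (hpart (D c) (hCD c hcC)).mpr h2
            have h3 := (hsame c hcC).mpr this
            exact absurd ((hpart c hcC).mp h3) (by simpa using hcs2)
          have hbs1 : CBetween z b (D z) := ih.2
          have hbs1' : CBetween z (D b) (D z) := (hsame b ih.1).mp hbs1
          exact nocross_sep hbs1 hbs1' hcs2 hcs2' hc
        · subst he
          exact ⟨hCD b ih.1, (hsame b ih.1).mp ih.2⟩
    have hreach : Relation.ReflTransGen R c2 c1 :=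
      Relation.ReflTransGen.trans (hCconn c2 hc2C) hc1C
    have := (hchain c1 hreach).2
    exact absurd ((hpart c1 hc1C).mp this) (by simpa using hc1s2)
  -- the finset of component points
  set CF : Finset (Fin N) := Finset.univ.filter C with hCF
  have hCFmem : ∀ x, x ∈ CF ↔ C x := by
    intro x; simp [hCF]
  have hCFne : CF.Nonempty := ⟨a0, (hCFmem a0).mpr hCa0⟩
  obtain ⟨g, hg⟩ := hAc
  have hgC : ¬ C g := fun h => (Finset.mem_compl.mp hg) (hCA g h)
  -- candidate pairs
  set P : Fin N → Fin N → Prop := fun x y => C x ∧ C y ∧ cdist x y + 2 ≤ N ∧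
    ∀ c, C c → cdist x c ≤ cdist x y with hPdef
  set PF : Finset (Fin N × Fin N) := Finset.univ.filter (fun pr => P pr.1 pr.2) with hPF
  have hPFmem : ∀ pr : Fin N × Fin N, pr ∈ PF ↔ P pr.1 pr.2 := by
    intro pr; simp [hPF]
  -- a candidate exists
  have hPne : PF.Nonempty := by
    obtain ⟨x0, hx0, hx0min⟩ := Finset.exists_min_image CF (fun c => cdist g c) hCFne
    obtain ⟨y0, hy0, hy0max⟩ := Finset.exists_max_image CF (fun c => cdist g c) hCFne
    rw [hCFmem] at hx0 hy0
    have hgx0 : 0 < cdist g x0 := by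
      rcases Nat.eq_zero_or_pos (cdist g x0) with h | h
      · exact absurd (cdist_eq_zero_iff.mp h).symm (fun h2 => hgC (h2 ▸ hx0))
      · exact h
    have hP : P x0 y0 := by
      refine ⟨hx0, hy0, ?_, ?_⟩
      · rcases cdist_rel g x0 y0 with ⟨h1, h2⟩ | ⟨h1, h2⟩
        · have := cdist_lt g y0
          omega
        · have := hy0max x0 ((hCFmem x0).mpr hx0)
          try simp only at this
          omega
      · intro c hc
        have hminc := hx0min c ((hCFmem c).mpr hc)
        have hmaxc := hy0max c ((hCFmem c).mpr hc)
        have hminy := hx0min y0 ((hCFmem y0).mpr hy0)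
        try simp only at hminc hmaxc hminy
        rcases cdist_rel g x0 c with ⟨h1, h2⟩ | ⟨h1, h2⟩ <;>
          rcases cdist_rel g x0 y0 with ⟨h3, h4⟩ | ⟨h3, h4⟩ <;> omega
    exact ⟨(x0, y0), (hPFmem _).mpr hP⟩
  obtain ⟨pr, hprPF, hprmin⟩ := Finset.exists_min_image PF (fun pr => cdist pr.1 pr.2) hPne
  obtain ⟨hXC, hYC, hprop, hcont⟩ := (hPFmem pr).mp hprPF
  set X := pr.1 with hX
  set Y := pr.2 with hY
  set d := cdist X Y with hd
  -- saturation of the arc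
  have hsat : ∀ z, cdist X z ≤ d → cdist X (D z) ≤ d := by
    intro z h1
    by_contra h2
    push_neg at h2
    have hzC : ¬ C z := by
      intro h
      exact absurd (hcont (D z) (hCD z h)) (by omega)
    have hzX : z ≠ X := fun h => hzC (h ▸ hXC)
    have hXz : 0 < cdist X z := by
      rcases Nat.eq_zero_or_pos (cdist X z) with h | h
      · exact absurd (cdist_inj (h.trans (cdist_self X).symm)) hzX
      · exact h
    have hXDz := cdist_lt X (D z)
    -- X is not strictly between z and D z
    have hXnots1 : ¬ CBetween z X (D z) := by
      intro h
      have h1' : cdist z X < cdist z (D z) := h.2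
      rcases cdist_rel X z X with ⟨h3, h4⟩ | ⟨h3, h4⟩
      · rw [cdist_self] at h3; omega
      · rcases cdist_rel X z (D z) with ⟨h5, h6⟩ | ⟨h5, h6⟩
        · rw [cdist_self] at h4; omega
        · omega
    rcases hzout z hzC with hside | hside
    · exact hXnots1 (hside X hXC)
    · -- all of C strictly between D z and z; C is before z
      have hkey : ∀ c, C c → cdist X c < cdist X z := by
        intro c hc
        have hs := hside c hc
        have hs1 : 0 < cdist (D z) c := hs.1
        have hs2 : cdist (D z) c < cdist (D z) z := hs.2
        have hcc := hcont c hc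
        have hcz : c ≠ z := hCne z hzC c hc
        have hne2 : cdist X c ≠ cdist X z := fun h => hcz (cdist_inj h)
        rcases cdist_rel X (D z) c with ⟨h3, h4⟩ | ⟨h3, h4⟩ <;>
          rcases cdist_rel X (D z) z with ⟨h5, h6⟩ | ⟨h5, h6⟩ <;> omega
      obtain ⟨y', hy'CF, hy'max⟩ := Finset.exists_max_image CF (fun c => cdist X c) hCFne
      rw [hCFmem] at hy'CF
      have hPy : P X y' := by
        refine ⟨hXC, hy'CF, ?_, ?_⟩
        · have := hcont y' hy'CF
          omega
        · intro c hc
          have := hy'max c ((hCFmem c).mpr hc)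
          simpa using this
      have hmem : (X, y') ∈ PF := (hPFmem _).mpr hPy
      have hlt : cdist X y' < d := by
        have h5 := hkey y' hy'CF
        omega
      have h7 : cdist X Y ≤ cdist X y' := hprmin (X, y') hmem
      omega
  -- convert the saturated arc to a linear interval
  rcases Nat.lt_or_ge (X.val + d) N with hw | hw
  · refine ⟨X.val, X.val + d, by omega, by omega, ?_, ?_⟩
    · rcases Nat.eq_zero_or_pos X.val with h | h
      · right; omega
      · left; exact h
    · intro i h1 h2
      have hXi : cdist X i ≤ d := by
        rw [cdist_eq]
        rw [if_pos h1]
        omega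
      have hDi := hsat i hXi
      have hDlt := (D i).isLt
      rw [cdist_eq] at hDi
      split_ifs at hDi <;> omega
  · have hX2 : 2 ≤ X.val := by
      have := cdist_lt X Y
      omega
    refine ⟨X.val + d + 1 - N, X.val - 1, by omega, by omega, by left; omega, ?_⟩
    intro i h1 h2
    have hiX : i.val < X.val := by omega
    have hXi : ¬ (cdist X i ≤ d) := by
      rw [cdist_eq, if_neg (by omega)]
      have := i.isLt
      omega
    have hDi : ¬ (cdist X (D i) ≤ d) := by
      intro h
      have := hsat (D i) h
      rw [hinv] at this
      exact hXi this
    rw [cdist_eq] at hDi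
    have hDlt := (D i).isLt
    split_ifs at hDi <;> omega


lemma deleteChord_eq {M : ℕ} (m : Fin (M + 2) → Fin (M + 2)) (p : Fin (M + 2))
    (hc : ((Finset.univ.erase p).erase (m p)).card = M) :
    deleteChord m p = fun i =>
      if h : m (((Finset.univ.erase p).erase (m p)).orderIsoOfFin hc i) ∈
          (Finset.univ.erase p).erase (m p)
      then (((Finset.univ.erase p).erase (m p)).orderIsoOfFin hc).symm
        ⟨m (((Finset.univ.erase p).erase (m p)).orderIsoOfFin hc i), h⟩ else i := by
  unfold deleteChord
  rw [dif_pos hc]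

end DZF

set_option maxHeartbeats 1000000 in
theorem disconnected_zero_filling_is_boundary {n : ℕ}
    (D : Fin (2 * n + 2) → Fin (2 * n + 2))
    (hinv : Function.Involutive D) (hfix : ∀ i, D i ≠ i)
    (hone : numCycles D = 1) (hdisc : Disconnected D) :
    ∃ (D' : Fin (2 * n + 2 + 2) → Fin (2 * n + 2 + 2)) (p : Fin (2 * n + 2 + 2)),
      Function.Involutive D' ∧ (∀ i, D' i ≠ i) ∧
      numCycles D' = 2 ∧
      (∀ b, ¬ Crosses D' p b) ∧
      (∃ i, CBetween p i (D' p)) ∧ (∃ j, CBetween (D' p) j p) ∧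
      deleteChord D' p = D ∧
      ∃ ε : ℤ, (ε = 1 ∨ ε = -1) ∧
        boundarySum D' - ε • Finsupp.single D 1 ∈
          Submodule.span ℤ {f : (Fin (2 * n + 2) → Fin (2 * n + 2)) →₀ ℤ |
            ∃ m, 2 ≤ numCycles m ∧ f = Finsupp.single m 1} := by
  classical
  obtain ⟨l, r, hlr, hrM, hproper, hsat⟩ := DZF.exists_interval D hinv hfix hdisc
  obtain ⟨p1, hp1v⟩ : ∃ p : Fin (2 * n + 2 + 2), p.val = l := ⟨⟨l, by omega⟩, rfl⟩
  obtain ⟨p2, hp2v⟩ : ∃ p : Fin (2 * n + 2 + 2), p.val = r + 2 := ⟨⟨r + 2, by omega⟩, rfl⟩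
  have hp12 : p1 ≠ p2 := by
    intro h
    have := congrArg Fin.val h
    rw [hp1v, hp2v] at this
    omega
  obtain ⟨f, hfval⟩ : ∃ f : Fin (2 * n + 2) → Fin (2 * n + 2 + 2), ∀ i, (f i).val =
      if i.val < l then i.val else if i.val ≤ r then i.val + 1 else i.val + 2 :=
    ⟨fun i => ⟨if i.val < l then i.val else if i.val ≤ r then i.val + 1 else i.val + 2,
      by have := i.isLt; split_ifs <;> omega⟩, fun i => rfl⟩
  have hfmono : StrictMono f := by
    intro a b hab
    have ha := a.isLt; have hb := b.isLt
    rw [Fin.lt_def] at hab ⊢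
    rw [hfval, hfval]
    split_ifs <;> omega
  have hfnel : ∀ j, (f j).val ≠ l := by
    intro j; have := j.isLt; rw [hfval]; split_ifs <;> omega
  have hfner : ∀ j, (f j).val ≠ r + 2 := by
    intro j; have := j.isLt; rw [hfval]; split_ifs <;> omega
  have hfnep1 : ∀ j, f j ≠ p1 := fun j h => hfnel j (by rw [h, hp1v])
  have hfnep2 : ∀ j, f j ≠ p2 := fun j h => hfner j (by rw [h, hp2v])
  obtain ⟨finv, hfinvval⟩ : ∃ g : Fin (2 * n + 2 + 2) → Fin (2 * n + 2), ∀ z, (g z).val =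
      if z.val < l then z.val else if z.val ≤ r + 1 then z.val - 1 else z.val - 2 :=
    ⟨fun z => ⟨if z.val < l then z.val else if z.val ≤ r + 1 then z.val - 1 else z.val - 2,
      by have := z.isLt; split_ifs <;> omega⟩, fun z => rfl⟩
  have hgf : ∀ i, finv (f i) = i := by
    intro i
    have := i.isLt
    apply Fin.ext
    rw [hfinvval, hfval]
    split_ifs <;> omega
  have hfg : ∀ z : Fin (2 * n + 2 + 2), z.val ≠ l → z.val ≠ r + 2 → f (finv z) = z := by
    intro z h1 h2
    have := z.isLt
    apply Fin.ext
    rw [hfval, hfinvval]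
    split_ifs <;> omega
  obtain ⟨D', hD'p1, hD'p2, hD'f⟩ : ∃ D' : Fin (2 * n + 2 + 2) → Fin (2 * n + 2 + 2),
      D' p1 = p2 ∧ D' p2 = p1 ∧ ∀ i, D' (f i) = f (D i) := by
    refine ⟨fun z => if z.val = l then p2 else if z.val = r + 2 then p1 else f (D (finv z)),
      ?_, ?_, ?_⟩
    · dsimp only
      rw [if_pos hp1v]
    · dsimp only
      rw [if_neg (by rw [hp2v]; omega), if_pos hp2v]
    · intro i
      dsimp only
      rw [if_neg (hfnel i), if_neg (hfner i), hgf]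
  have hcases : ∀ z : Fin (2 * n + 2 + 2), z = p1 ∨ z = p2 ∨ ∃ i, f i = z := by
    intro z
    by_cases h1 : z.val = l
    · exact Or.inl (Fin.ext (h1.trans hp1v.symm))
    by_cases h2 : z.val = r + 2
    · exact Or.inr (Or.inl (Fin.ext (h2.trans hp2v.symm)))
    · exact Or.inr (Or.inr ⟨finv z, hfg z h1 h2⟩)
  have hD'inv : Function.Involutive D' := by
    intro z
    rcases hcases z with rfl | rfl | ⟨i, rfl⟩
    · rw [hD'p1, hD'p2]
    · rw [hD'p2, hD'p1]
    · rw [hD'f, hD'f, hinv]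
  have hD'fix : ∀ z, D' z ≠ z := by
    intro z
    rcases hcases z with rfl | rfl | ⟨i, rfl⟩
    · rw [hD'p1]; exact hp12.symm
    · rw [hD'p2]; exact hp12
    · rw [hD'f]; exact fun h => hfix i (hfmono.injective h)
  have hBf : ∀ z : Fin (2 * n + 2 + 2), CBetween p1 z p2 ↔ (l < z.val ∧ z.val < r + 2) := by
    intro z
    rw [DZF.cbetween_iff, hp1v, hp2v]
    have := z.isLt
    omega
  have hfJ : ∀ i, (l < (f i).val ∧ (f i).val < r + 2) ↔ (l ≤ i.val ∧ i.val ≤ r) := by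
    intro i
    have := i.isLt
    rw [hfval]
    split_ifs <;> omega
  have hiff : ∀ b, CBetween p1 b p2 ↔ CBetween p1 (D' b) p2 := by
    intro b
    rcases hcases b with rfl | rfl | ⟨i, rfl⟩
    · rw [hD'p1, hBf, hBf, hp1v, hp2v]
      omega
    · rw [hD'p2, hBf, hBf, hp1v, hp2v]
      omega
    · rw [hD'f, hBf, hBf, hfJ, hfJ]
      constructor
      · intro h
        exact hsat i h.1 h.2
      · intro h
        have := hsat (D i) h.1 h.2
        rwa [hinv] at this
  have hncross : ∀ b, ¬ Crosses D' p1 b := by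
    intro b hc
    rw [Crosses, hD'p1] at hc
    rcases hc with ⟨h1, h2⟩ | ⟨h1, h2⟩
    · exact h2 ((hiff b).mp h1)
    · exact h2 ((hiff b).mpr h1)
  have hcl' : ∀ x, CBetween p1 x (D' p1) → CBetween p1 (D' x) (D' p1) := by
    intro x h
    rw [hD'p1] at h ⊢
    exact (hiff x).mp h
  obtain ⟨il, hilv⟩ : ∃ z : Fin (2 * n + 2), z.val = l := ⟨⟨l, by omega⟩, rfl⟩
  have hw1 : ∃ i, CBetween p1 i (D' p1) := by
    refine ⟨f il, ?_⟩
    rw [hD'p1, hBf, hfJ, hilv]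
    omega
  have hBf2 : ∀ z : Fin (2 * n + 2 + 2), CBetween p2 z p1 ↔ (z.val < l ∨ r + 2 < z.val) := by
    intro z
    rw [DZF.cbetween_iff, hp1v, hp2v]
    have := z.isLt
    omega
  have hw2 : ∃ j, CBetween (D' p1) j p1 := by
    rw [hD'p1]
    rcases hproper with hl | hr
    · obtain ⟨z0, hz0⟩ : ∃ z : Fin (2 * n + 2), z.val = 0 := ⟨⟨0, by omega⟩, rfl⟩
      refine ⟨f z0, ?_⟩
      rw [hBf2, hfval, hz0]
      split_ifs <;> omega
    · obtain ⟨z0, hz0⟩ : ∃ z : Fin (2 * n + 2), z.val = 2 * n + 1 := ⟨⟨2 * n + 1, by omega⟩, rfl⟩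
      refine ⟨f z0, ?_⟩
      rw [hBf2, hfval, hz0]
      split_ifs <;> omega
  have hbD'inj : Function.Injective (bperm D') := DZF.bperm_inj hD'inv
  have hbDinj : Function.Injective (bperm D) := DZF.bperm_inj hinv
  have hone' : ∀ x y, DZF.Reach (bperm D) x y := DZF.all_reach_of_one hbDinj hone
  have hcnextf : ∀ w : Fin (2 * n + 2), cnext (f w) =
      if w.val = r then p2 else if (cnext w).val = l then p1 else f (cnext w) := by
    intro w
    have hw := w.isLt
    apply Fin.ext
    rw [apply_ite Fin.val, apply_ite Fin.val, DZF.cnext_val, hfval w, hfval (cnext w),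
      DZF.cnext_val w, hp1v, hp2v]
    split_ifs <;> omega
  obtain ⟨ir, hirv⟩ : ∃ z : Fin (2 * n + 2), z.val = if r + 1 = 2 * n + 2 then 0 else r + 1 :=
    ⟨⟨if r + 1 = 2 * n + 2 then 0 else r + 1, by split_ifs <;> omega⟩, rfl⟩
  have hbp1f : bperm D' p1 = f ir := by
    show cnext (D' p1) = f ir
    rw [hD'p1]
    apply Fin.ext
    rw [DZF.cnext_val, hfval, hirv, hp2v]
    rcases hproper with hl | hr <;> split_ifs <;> omega
  have hbp2f : bperm D' p2 = f il := by
    show cnext (D' p2) = f il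
    rw [hD'p2]
    apply Fin.ext
    rw [DZF.cnext_val, hfval, hilv, hp1v]
    split_ifs <;> omega
  have hstepcov : ∀ w : Fin (2 * n + 2),
      (DZF.Reach (bperm D') p1 (f w) ∨ DZF.Reach (bperm D') p2 (f w)) →
      (DZF.Reach (bperm D') p1 (f (bperm D w)) ∨ DZF.Reach (bperm D') p2 (f (bperm D w))) := by
    intro w hw
    have hbd : bperm D w = cnext (D w) := rfl
    have hb : bperm D' (f w) = cnext (f (D w)) := by
      show cnext (D' (f w)) = _
      rw [hD'f]
    by_cases h1 : (D w).val = r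
    · left
      have h2 : bperm D w = ir := by
        rw [hbd]
        apply Fin.ext
        rw [DZF.cnext_val, hirv, h1]
      rw [h2, ← hbp1f]
      exact ⟨1, by rw [Function.iterate_one]⟩
    by_cases h2 : (cnext (D w)).val = l
    · right
      have h3 : bperm D w = il := by
        rw [hbd]
        exact Fin.ext (by rw [h2, hilv])
      rw [h3, ← hbp2f]
      exact ⟨1, by rw [Function.iterate_one]⟩
    · have h3 : bperm D' (f w) = f (bperm D w) := by
        rw [hb, hcnextf (D w), if_neg h1, if_neg h2, hbd]
      rcases hw with hw | hw
      · left
        have := DZF.reach_step hw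
        rwa [h3] at this
      · right
        have := DZF.reach_step hw
        rwa [h3] at this
  have hcovf : ∀ i : Fin (2 * n + 2),
      DZF.Reach (bperm D') p1 (f i) ∨ DZF.Reach (bperm D') p2 (f i) := by
    have hbase : DZF.Reach (bperm D') p2 (f il) :=
      ⟨1, by rw [Function.iterate_one]; exact hbp2f⟩
    have hiter : ∀ k, DZF.Reach (bperm D') p1 (f ((bperm D)^[k] il)) ∨
        DZF.Reach (bperm D') p2 (f ((bperm D)^[k] il)) := by
      intro k
      induction k with
      | zero => exact Or.inr hbase
      | succ k ih =>
        rw [Function.iterate_succ_apply']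
        exact hstepcov _ ih
    intro i
    obtain ⟨k, hk⟩ := hone' il i
    rw [← hk]
    exact hiter k
  have hcov : ∀ z, DZF.Reach (bperm D') p1 z ∨ DZF.Reach (bperm D') p2 z := by
    intro z
    rcases hcases z with rfl | rfl | ⟨i, rfl⟩
    · exact Or.inl (DZF.reach_refl _ _)
    · exact Or.inr (DZF.reach_refl _ _)
    · exact hcovf i
  have hnr : ¬ DZF.Reach (bperm D') p2 p1 := by
    have := DZF.not_reach_of_noncross D' p1 (hD'inv p1) (hD'fix p1) hcl'
    rwa [hD'p1] at this
  have hcyc2 : numCycles D' = 2 :=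
    DZF.numCycles_eq_two hbD'inj (fun h => hnr (DZF.reach_symm hbD'inj h)) hcov
  have hp2memerase : p2 ∈ Finset.univ.erase p1 :=
    Finset.mem_erase.mpr ⟨hp12.symm, Finset.mem_univ _⟩
  have hs : ((Finset.univ.erase p1).erase p2).card = 2 * n + 2 := by
    rw [Finset.card_erase_of_mem hp2memerase,
      Finset.card_erase_of_mem (Finset.mem_univ p1), Finset.card_univ, Fintype.card_fin]
    omega
  have hfs : ∀ i, f i ∈ (Finset.univ.erase p1).erase p2 :=
    fun i => Finset.mem_erase.mpr ⟨hfnep2 i, Finset.mem_erase.mpr ⟨hfnep1 i, Finset.mem_univ _⟩⟩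
  have hcard : ((Finset.univ.erase p1).erase (D' p1)).card = 2 * n + 2 := by
    rw [hD'p1]; exact hs
  have hdel : deleteChord D' p1 = D := by
    funext i
    rw [congrFun (DZF.deleteChord_eq D' p1 hcard) i]
    have hfs' : ∀ j, f j ∈ (Finset.univ.erase p1).erase (D' p1) := by
      rw [hD'p1]; exact hfs
    set e := ((Finset.univ.erase p1).erase (D' p1)).orderIsoOfFin hcard with he
    have hef : ∀ j, (e j : Fin (2 * n + 2 + 2)) = f j := by
      have h1 : f = ((Finset.univ.erase p1).erase (D' p1)).orderEmbOfFin hcard :=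
        Finset.orderEmbOfFin_unique hcard hfs' hfmono
      intro j
      rw [Finset.coe_orderIsoOfFin_apply, ← h1]
    have h2 : D' ↑(e i) = f (D i) := by rw [hef, hD'f]
    have h3 : D' ↑(e i) ∈ (Finset.univ.erase p1).erase (D' p1) := by
      rw [h2]; exact hfs' (D i)
    rw [dif_pos h3]
    have h4 : (⟨D' ↑(e i), h3⟩ : {x // x ∈ (Finset.univ.erase p1).erase (D' p1)}) = e (D i) :=
      Subtype.ext (show D' ↑(e i) = ↑(e (D i)) by rw [h2, hef])
    rw [h4, OrderIso.symm_apply_apply]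
  have hdel2 : ∀ a : Fin (2 * n + 2 + 2), a < D' a → a ≠ p1 →
      2 ≤ numCycles (deleteChord D' a) := by
    intro a ha hnep1
    have hnep2 : a ≠ p2 := by
      intro h
      rw [h, hD'p2] at ha
      have h2 := Fin.lt_def.mp ha
      rw [hp1v, hp2v] at h2
      omega
    rcases hcases a with rfl | rfl | ⟨i, rfl⟩
    · exact absurd rfl hnep1
    · exact absurd rfl hnep2
    have hne : f (D i) ≠ f i := fun h => hfix i (hfmono.injective h)
    have hc2 : ((Finset.univ.erase (f i)).erase (D' (f i))).card = 2 * n + 2 := by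
      rw [hD'f, Finset.card_erase_of_mem (Finset.mem_erase.mpr ⟨hne, Finset.mem_univ _⟩),
        Finset.card_erase_of_mem (Finset.mem_univ _), Finset.card_univ, Fintype.card_fin]
      omega
    set m2 := deleteChord D' (f i) with hm2def
    have hm2app : ∀ j, m2 j =
        if h : D' (((Finset.univ.erase (f i)).erase (D' (f i))).orderIsoOfFin hc2 j) ∈
            (Finset.univ.erase (f i)).erase (D' (f i))
        then (((Finset.univ.erase (f i)).erase (D' (f i))).orderIsoOfFin hc2).symm
          ⟨D' (((Finset.univ.erase (f i)).erase (D' (f i))).orderIsoOfFin hc2 j), h⟩ else j := by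
      intro j
      rw [hm2def]
      exact congrFun (DZF.deleteChord_eq D' (f i) hc2) j
    set e2 := ((Finset.univ.erase (f i)).erase (D' (f i))).orderIsoOfFin hc2 with he2
    have hp1s2 : p1 ∈ (Finset.univ.erase (f i)).erase (D' (f i)) := by
      refine Finset.mem_erase.mpr ⟨?_, Finset.mem_erase.mpr ⟨fun h => hfnep1 i h.symm,
        Finset.mem_univ _⟩⟩
      rw [hD'f]
      exact fun h => hfnep1 (D i) h.symm
    have hp2s2 : p2 ∈ (Finset.univ.erase (f i)).erase (D' (f i)) := by
      refine Finset.mem_erase.mpr ⟨?_, Finset.mem_erase.mpr ⟨fun h => hfnep2 i h.symm,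
        Finset.mem_univ _⟩⟩
      rw [hD'f]
      exact fun h => hfnep2 (D i) h.symm
    set P := e2.symm ⟨p1, hp1s2⟩ with hP
    set Q := e2.symm ⟨p2, hp2s2⟩ with hQ
    have hePval : (↑(e2 P) : Fin (2 * n + 2 + 2)) = p1 := by
      rw [hP, OrderIso.apply_symm_apply]
    have heQval : (↑(e2 Q) : Fin (2 * n + 2 + 2)) = p2 := by
      rw [hQ, OrderIso.apply_symm_apply]
    have hmono2 : StrictMono (fun j => (↑(e2 j) : Fin (2 * n + 2 + 2))) :=
      fun a b h => Subtype.coe_lt_coe.mpr (e2.strictMono h)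
    have hm2P : m2 P = Q := by
      rw [hm2app P]
      have h1 : D' ↑(e2 P) ∈ (Finset.univ.erase (f i)).erase (D' (f i)) := by
        rw [hePval, hD'p1]
        exact hp2s2
      rw [dif_pos h1]
      have h2 : (⟨D' ↑(e2 P), h1⟩ : {x // x ∈ (Finset.univ.erase (f i)).erase (D' (f i))}) =
          ⟨p2, hp2s2⟩ := Subtype.ext (show D' ↑(e2 P) = p2 by rw [hePval, hD'p1])
      rw [h2, hQ]
    have hm2inv : Function.Involutive m2 := DZF.deleteChord_involutive D' hD'inv (f i)
    have hm2inj : Function.Injective (bperm m2) := DZF.bperm_inj hm2inv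
    have hQP : m2 P ≠ P := by
      rw [hm2P]
      intro h
      have h2 := congrArg (fun t => (↑(e2 t) : Fin (2 * n + 2 + 2))) h
      try simp only at h2
      rw [hePval, heQval] at h2
      exact hp12 h2.symm
    have hcl2 : ∀ x, CBetween P x (m2 P) → CBetween P (m2 x) (m2 P) := by
      intro x hx
      rw [hm2P] at hx ⊢
      have t0 := DZF.cbetween_strictMono hmono2 P x Q
      try simp only at t0
      rw [hePval, heQval] at t0
      have t1 : CBetween p1 ↑(e2 x) p2 := t0.mpr hx
      have t2 : CBetween p1 (D' ↑(e2 x)) p2 := (hiff _).mp t1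
      rw [hm2app x]
      by_cases h : D' ↑(e2 x) ∈ (Finset.univ.erase (f i)).erase (D' (f i))
      · rw [dif_pos h]
        have hmid : (↑(e2 (e2.symm ⟨D' ↑(e2 x), h⟩)) : Fin (2 * n + 2 + 2)) = D' ↑(e2 x) := by
          rw [OrderIso.apply_symm_apply]
        have t3 := DZF.cbetween_strictMono hmono2 P (e2.symm ⟨D' ↑(e2 x), h⟩) Q
        try simp only at t3
        rw [hePval, heQval, hmid] at t3
        exact t3.mp t2
      · rw [dif_neg h]
        exact hx
    have hnr2 : ¬ DZF.Reach (bperm m2) (m2 P) P :=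
      DZF.not_reach_of_noncross m2 P (hm2inv P) hQP hcl2
    exact DZF.two_le_numCycles hm2inj hnr2
  refine ⟨D', p1, hD'inv, hD'fix, hcyc2, hncross, hw1, hw2, hdel, ?_⟩
  refine ⟨(-1 : ℤ) ^ ((Finset.univ.filter fun b => b < D' b ∧ b < p1).card), ?_, ?_⟩
  · rcases Nat.even_or_odd ((Finset.univ.filter fun b => b < D' b ∧ b < p1).card) with h | h
    · left; exact h.neg_one_pow
    · right; exact h.neg_one_pow
  · have hp1F : p1 ∈ Finset.univ.filter (fun a => a < D' a) := by
      refine Finset.mem_filter.mpr ⟨Finset.mem_univ _, ?_⟩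
      rw [Fin.lt_def, hD'p1, hp1v, hp2v]
      omega
    have hsum : boundarySum D' =
        ((-1 : ℤ) ^ ((Finset.univ.filter fun b => b < D' b ∧ b < p1).card)) •
          Finsupp.single D 1 +
        ∑ a ∈ (Finset.univ.filter (fun a => a < D' a)).erase p1,
          ((-1 : ℤ) ^ ((Finset.univ.filter fun b => b < D' b ∧ b < a).card)) •
            Finsupp.single (deleteChord D' a) 1 := by
      unfold boundarySum
      conv_lhs => rw [← Finset.insert_erase hp1F]
      rw [Finset.sum_insert (Finset.notMem_erase _ _), hdel]
    rw [hsum, add_sub_cancel_left]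
    apply Submodule.sum_mem
    intro a haF
    obtain ⟨hane, haF'⟩ := Finset.mem_erase.mp haF
    have ha := (Finset.mem_filter.mp haF').2
    apply Submodule.smul_mem
    apply Submodule.subset_span
    exact ⟨deleteChord D' a, hdel2 a ha hane, rfl⟩
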